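/- For every word u on X^{±1}, the elements qu and q are conjugate in the Miller Machine M(G) if and only if u represents the identity of G. -/

import Mathlib

/-!
Common setup: a finitely presented group `G = ⟨X ∣ R⟩` (`X` a finite set, `R` a finite
nonempty set of words of the free group `F(X)`) and its Miller machine `M(G)`,
the group generated by `X ∪ Θ ∪ {q}`, where `Θ = {θ_α : α ∈ X ∪ R}`, subject to
the relations `θ_α x = x θ_α` (`x ∈ X`, `α ∈ X ∪ R`), `θ_x x q = q x θ_x` (`x ∈ X`)
and `θ_r q = q r θ_r` (`r ∈ R`).
-/

namespace Miller

noncomputable section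

/-- Index type for the letters `Θ`: one letter `θ_α` for each `α ∈ X ∪ R`
(since `X ∩ R = ∅`, the disjoint sum is faithful). -/
abbrev ThIdx (X : Type) (R : Finset (FreeGroup X)) : Type := X ⊕ {r : FreeGroup X // r ∈ R}

/-- The generators of the Miller machine: the letters of `X`, the letters `Θ`, and `q`. -/
abbrev Gen (X : Type) (R : Finset (FreeGroup X)) : Type := X ⊕ (ThIdx X R ⊕ Unit)

variable (X : Type) (R : Finset (FreeGroup X))

/-- The letter `x ∈ X`, as a word on the generators of `M(G)`. -/
def xg (x : X) : FreeGroup (Gen X R) := FreeGroup.of (Sum.inl x)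

/-- The letter `θ_α`, as a word on the generators of `M(G)`. -/
def θg (a : ThIdx X R) : FreeGroup (Gen X R) := FreeGroup.of (Sum.inr (Sum.inl a))

/-- The letter `q`, as a word on the generators of `M(G)`. -/
def qg : FreeGroup (Gen X R) := FreeGroup.of (Sum.inr (Sum.inr ()))

/-- A word on `X` is in particular a word on the generators of `M(G)`. -/
def ofX : FreeGroup X →* FreeGroup (Gen X R) := FreeGroup.map Sum.inl

/-- The defining relators of the Miller machine `M(G)`. -/
def rels : Set (FreeGroup (Gen X R)) :=
  {w | (∃ (a : ThIdx X R) (x : X),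
          w = θg X R a * xg X R x * (xg X R x * θg X R a)⁻¹) ∨
       (∃ x : X,
          w = θg X R (Sum.inl x) * xg X R x * qg X R *
              (qg X R * xg X R x * θg X R (Sum.inl x))⁻¹) ∨
       (∃ r : {r : FreeGroup X // r ∈ R},
          w = θg X R (Sum.inr r) * qg X R *
              (qg X R * ofX X R r.1 * θg X R (Sum.inr r))⁻¹)}

/-- The group `G = ⟨X ∣ R⟩`. -/
abbrev G := PresentedGroup (R : Set (FreeGroup X))

/-- The Miller machine `M(G)`. -/
abbrev M := PresentedGroup (rels X R)

/-- The element of `G` represented by a word on `X`. -/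
def toG : FreeGroup X →* G X R := PresentedGroup.mk _

/-- The element of `M(G)` represented by a word on the generators. -/
def toM : FreeGroup (Gen X R) →* M X R := PresentedGroup.mk _

/-- The element of `M(G)` represented by a word on `X`. -/
def embX : FreeGroup X →* M X R := (toM X R).comp (ofX X R)

/-- The element of `M(G)` represented by a word on `Θ`. -/
def embTh : FreeGroup (ThIdx X R) →* M X R :=
  (toM X R).comp (FreeGroup.map fun a => Sum.inr (Sum.inl a))

/-- The generator `x ∈ X` as element of `M(G)`. -/
def xM (x : X) : M X R := toM X R (xg X R x)

/-- The generator `θ_α` as element of `M(G)`. -/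
def θM (a : ThIdx X R) : M X R := toM X R (θg X R a)

/-- The generator `q` as element of `M(G)`. -/
def qM : M X R := toM X R (qg X R)

/-- The subgroup `⟨X, q⟩` of `M(G)`. -/
def XqSub : Subgroup (M X R) := Subgroup.closure (Set.range (xM X R) ∪ {qM X R})

/-- The subgroup `⟨Θ⟩` of `M(G)`. -/
def ThSub : Subgroup (M X R) := Subgroup.closure (Set.range (θM X R))

/-- The subgroup `H = ⟨X ∪ Θ⟩` of `M(G)`. -/
def Hgrp : Subgroup (M X R) := Subgroup.closure (Set.range (xM X R) ∪ Set.range (θM X R))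

/-- The subgroup `K₋₁ = ⟨{θ_x x : x ∈ X} ∪ {θ_r : r ∈ R}⟩` of `M(G)`. -/
def Kneg : Subgroup (M X R) := Subgroup.closure
  ((Set.range fun x : X => θM X R (Sum.inl x) * xM X R x) ∪
   (Set.range fun r : {r : FreeGroup X // r ∈ R} => θM X R (Sum.inr r)))

/-- The subgroup `K₁ = ⟨{θ_x x : x ∈ X} ∪ {θ_r r : r ∈ R}⟩` of `M(G)`. -/
def Kpos : Subgroup (M X R) := Subgroup.closure
  ((Set.range fun x : X => θM X R (Sum.inl x) * xM X R x) ∪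
   (Set.range fun r : {r : FreeGroup X // r ∈ R} => θM X R (Sum.inr r) * embX X R r.1))

/-- `‖g‖`: the (reduced) word length of an element of a free group. -/
def wlen {β : Type} (g : FreeGroup β) : ℕ :=
  sInf {n | ∃ l : List (β × Bool), FreeGroup.mk l = g ∧ l.length = n}

/-- `|g|`: word length in `M(G)` with respect to the generating set `X ∪ Θ ∪ {q}`. -/
def mlen (g : M X R) : ℕ :=
  sInf {n | ∃ w : FreeGroup (Gen X R), toM X R w = g ∧ wlen w = n}

/-- `c(u,v)`: the minimal length of a conjugator taking `u` to `v` in `M(G)`. -/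
def c (u v : M X R) : ℕ :=
  sInf {n | ∃ γ : M X R, γ * u * γ⁻¹ = v ∧ mlen X R γ = n}

/-- `c'(u,v)`: the minimal length of a conjugator in `⟨X ∪ Θ⟩` taking `u` to `v`. -/
def c' (u v : M X R) : ℕ :=
  sInf {n | ∃ γ ∈ Hgrp X R, γ * u * γ⁻¹ = v ∧ mlen X R γ = n}

/-- The product `∏_{i<m} w_i r_i w_i⁻¹`. -/
def prodConj (m : ℕ) (w r : ℕ → FreeGroup X) : FreeGroup X :=
  ((List.range m).map fun i => w i * r i * (w i)⁻¹).prod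

/-- `r_0, …, r_{m-1} ∈ R^{±1}`. -/
def IsRelSeq (m : ℕ) (r : ℕ → FreeGroup X) : Prop := ∀ i < m, r i ∈ R ∨ (r i)⁻¹ ∈ R

/-- `δ(g)`: the least `m` such that `g` is freely equal to a product of `m`
conjugates of elements of `R^{±1}`. -/
def area (g : FreeGroup X) : ℕ :=
  sInf {m | ∃ w r : ℕ → FreeGroup X, IsRelSeq X R m r ∧ g = prodConj X m w r}

/-- The Dehn function `Δ` of the presentation `⟨X ∣ R⟩`. -/
def Dehn (n : ℕ) : ℕ :=
  sSup {d | ∃ g : FreeGroup X, wlen g ≤ n ∧ toG X R g = 1 ∧ area X R g = d}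

/-- `f(w) = m + ‖w₁‖ + ‖w_m‖ + ∑_{i=1}^{m-1} ‖w_i⁻¹ w_{i+1}‖` (with `0`-based indexing). -/
def fval (m : ℕ) (w : ℕ → FreeGroup X) : ℕ :=
  m + wlen (w 0) + wlen (w (m - 1)) + ∑ i ∈ Finset.range (m - 1), wlen ((w i)⁻¹ * w (i + 1))

/-- `λ(g)`: the minimum of `f(w)` over expressions `w = ∏ w_i r_i w_i⁻¹` freely equal to `g`. -/
def lam (g : FreeGroup X) : ℕ :=
  sInf {n | ∃ (m : ℕ) (w r : ℕ → FreeGroup X),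
    1 ≤ m ∧ IsRelSeq X R m r ∧ g = prodConj X m w r ∧ fval X m w = n}

/-- `Λ(n)`: the maximum of `λ(g)` over words `g` with `g =_G 1` and `‖g‖ ≤ n`. -/
def Lam (n : ℕ) : ℕ :=
  sSup {d | ∃ g : FreeGroup X, wlen g ≤ n ∧ toG X R g = 1 ∧ lam X R g = d}

/-- `t = max({‖r‖ : r ∈ R} ∪ {2})`. -/
def t : ℕ := max (R.sup fun r => wlen r) 2

/-- `w, ε` witness the iso-computational list conjugacy `u ∼^σ v` (indices `0,…,k-1`,
with the convention that the index after `k-1` is `0`, i.e. `σ_{k+1} = σ₁`). -/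
def IsICLCWitness (k : ℕ) (σ : ℕ → ℤ) (u v : ℕ → FreeGroup X) (w ε : FreeGroup X) : Prop :=
  toG X R ε = 1 ∧ ∀ i < k,
    (σ i = 1 ∧ σ ((i + 1) % k) = 1 → w * ε * u i * w⁻¹ = v i) ∧
    (σ i = 1 ∧ σ ((i + 1) % k) = -1 → w * ε * u i * ε⁻¹ * w⁻¹ = v i) ∧
    (σ i = -1 ∧ σ ((i + 1) % k) = 1 → w * u i * w⁻¹ = v i) ∧
    (σ i = -1 ∧ σ ((i + 1) % k) = -1 → w * u i * ε⁻¹ * w⁻¹ = v i)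

/-- Iso-computational list conjugacy `u ∼^σ v`. -/
def ICLC (k : ℕ) (σ : ℕ → ℤ) (u v : ℕ → FreeGroup X) : Prop :=
  ∃ w ε : FreeGroup X, IsICLCWitness X R k σ u v w ε

/-- `c_{k,σ}(u,v)`: the least `‖w‖` over witnessing pairs `(w, ε)` for `u ∼^σ v`. -/
def cList (k : ℕ) (σ : ℕ → ℤ) (u v : ℕ → FreeGroup X) : ℕ :=
  sInf {n | ∃ w ε : FreeGroup X, IsICLCWitness X R k σ u v w ε ∧ wlen w = n}

/-- `C_{k,σ}(n)`. -/
def CC (k : ℕ) (σ : ℕ → ℤ) (n : ℕ) : ℕ :=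
  sSup {d | ∃ u v : ℕ → FreeGroup X, ICLC X R k σ u v ∧
    (∑ i ∈ Finset.range k, (wlen (u i) + wlen (v i))) ≤ n - 2 * k ∧
    cList X R k σ u v = d}

/-- The alphabet `X ∪ {q}`. -/
abbrev Yt (X : Type) : Type := X ⊕ Unit

/-- The letter `q` in the free group `F(X ∪ {q})`. -/
def qY : FreeGroup (Yt X) := FreeGroup.of (Sum.inr ())

/-- A word on `X` as a word on `X ∪ {q}`. -/
def embY : FreeGroup X →* FreeGroup (Yt X) := FreeGroup.map Sum.inl

/-- The element of `M(G)` represented by a word on `X ∪ {q}`. -/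
def toMY : FreeGroup (Yt X) →* M X R :=
  (toM X R).comp (FreeGroup.map (Sum.elim Sum.inl fun u => Sum.inr (Sum.inr u)))

/-- The word `q^{σ₁}u₁q^{σ₂}u₂⋯q^{σ_k}u_k` on `X ∪ {q}` (`0`-based indexing). -/
def qword (k : ℕ) (σ : ℕ → ℤ) (u : ℕ → FreeGroup X) : FreeGroup (Yt X) :=
  ((List.range k).map fun i => qY X ^ σ i * embY X (u i)).prod

/-- The word `q^{σ₁}u₁q^{σ₂}u₂⋯q^{σ_k}u_k` is (freely) reduced, expressed as:
its reduced length equals the sum of the lengths of its letters. -/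
def ReducedForm (k : ℕ) (σ : ℕ → ℤ) (u : ℕ → FreeGroup X) : Prop :=
  wlen (qword X k σ u) = k + ∑ i ∈ Finset.range k, wlen (u i)

/-- The element `q^{σ₁}u₁q^{σ₂}u₂⋯q^{σ_k}u_k` of `M(G)`. -/
def qwordM (k : ℕ) (σ : ℕ → ℤ) (u : ℕ → FreeGroup X) : M X R :=
  toMY X R (qword X k σ u)

/-- `σ` is a tuple of signs `±1`. -/
def IsSgn (k : ℕ) (σ : ℕ → ℤ) : Prop := ∀ i < k, σ i = 1 ∨ σ i = -1

/-- `D_{k,σ}(n)`: restriction of the conjugator length function of `M(G)` to conjugate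
pairs `x = q^{σ₁}u₁⋯q^{σ_k}u_k`, `y = q^{σ₁}v₁⋯q^{σ_k}v_k` that are reduced words with
`∑ (‖u_i‖ + ‖v_i‖) ≤ n - 2k`. -/
def Dk (k : ℕ) (σ : ℕ → ℤ) (n : ℕ) : ℕ :=
  sSup {d | ∃ u v : ℕ → FreeGroup X,
    ReducedForm X k σ u ∧ ReducedForm X k σ v ∧
    IsConj (qwordM X R k σ u) (qwordM X R k σ v) ∧
    (∑ i ∈ Finset.range k, (wlen (u i) + wlen (v i))) ≤ n - 2 * k ∧
    c X R (qwordM X R k σ u) (qwordM X R k σ v) = d}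

/-- `D'_{k,σ}(n)`: as `D_{k,σ}(n)`, but for pairs conjugate via an element of `⟨X ∪ Θ⟩`
and with minimal conjugator length measured over conjugators in `⟨X ∪ Θ⟩`. -/
def Dk' (k : ℕ) (σ : ℕ → ℤ) (n : ℕ) : ℕ :=
  sSup {d | ∃ u v : ℕ → FreeGroup X,
    ReducedForm X k σ u ∧ ReducedForm X k σ v ∧
    (∃ γ ∈ Hgrp X R, γ * qwordM X R k σ u * γ⁻¹ = qwordM X R k σ v) ∧
    (∑ i ∈ Finset.range k, (wlen (u i) + wlen (v i))) ≤ n - 2 * k ∧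
    c' X R (qwordM X R k σ u) (qwordM X R k σ v) = d}

/-- `D₀(n)`: restriction of the conjugator length function of `M(G)` to pairs
`(qu, q)` with `u` a word on `X`, `qu` conjugate to `q`, and `‖u‖ ≤ n - 2`. -/
def D0 (n : ℕ) : ℕ :=
  sSup {d | ∃ u : FreeGroup X, wlen u ≤ n - 2 ∧
    IsConj (qM X R * embX X R u) (qM X R) ∧ c X R (qM X R * embX X R u) (qM X R) = d}

/-- `D'₀(n)`: as `D₀(n)`, via conjugators in `⟨X ∪ Θ⟩`. -/
def D0' (n : ℕ) : ℕ :=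
  sSup {d | ∃ u : FreeGroup X, wlen u ≤ n - 2 ∧
    (∃ γ ∈ Hgrp X R, γ * (qM X R * embX X R u) * γ⁻¹ = qM X R) ∧
    c' X R (qM X R * embX X R u) (qM X R) = d}

/-- The endomorphism `φ_α` of `F(X ∪ {q})`: it fixes each `x ∈ X` and sends `q` to
`α⁻¹qα` if `α ∈ X` and to `qα` if `α ∈ R`. -/
def phi (a : ThIdx X R) : FreeGroup (Yt X) →* FreeGroup (Yt X) :=
  FreeGroup.lift fun s =>
    match s with
    | Sum.inl x => FreeGroup.of (Sum.inl x : Yt X)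
    | Sum.inr _ =>
      match a with
      | Sum.inl x' => (FreeGroup.of (Sum.inl x' : Yt X))⁻¹ * qY X * FreeGroup.of (Sum.inl x')
      | Sum.inr r => qY X * embY X r.1

end

end Miller


section MillerAux

open Miller

variable {X : Type} {R : Finset (FreeGroup X)}

private lemma toM_eq_one_of_rel {w : FreeGroup (Gen X R)} (h : w ∈ rels X R) :
    toM X R w = 1 :=
  (QuotientGroup.eq_one_iff w).2 (Subgroup.subset_normalClosure h)

private lemma rel1 (a : ThIdx X R) (x : X) :
    θM X R a * xM X R x = xM X R x * θM X R a := by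
  have h := toM_eq_one_of_rel (Or.inl ⟨a, x, rfl⟩ : _ ∈ rels X R)
  simp only [map_mul, map_inv] at h
  exact mul_inv_eq_one.1 h

private lemma rel2 (x : X) :
    θM X R (Sum.inl x) * xM X R x * qM X R = qM X R * xM X R x * θM X R (Sum.inl x) := by
  have h := toM_eq_one_of_rel (Or.inr (Or.inl ⟨x, rfl⟩) : _ ∈ rels X R)
  simp only [map_mul, map_inv] at h
  exact mul_inv_eq_one.1 h

private lemma rel3 (r : {r : FreeGroup X // r ∈ R}) :
    θM X R (Sum.inr r) * qM X R = qM X R * embX X R r.1 * θM X R (Sum.inr r) := by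
  have h := toM_eq_one_of_rel (Or.inr (Or.inr ⟨r, rfl⟩) : _ ∈ rels X R)
  simp only [map_mul, map_inv] at h
  exact mul_inv_eq_one.1 h

private lemma embX_of (x : X) : embX X R (FreeGroup.of x) = xM X R x := rfl

private lemma commθ (a : ThIdx X R) (v : FreeGroup X) :
    Commute (θM X R a) (embX X R v) := by
  induction v using FreeGroup.induction_on with
  | C1 => rw [map_one]; exact Commute.one_right _
  | of x => exact rel1 a x
  | inv_of x h => rw [map_inv]; exact h.inv_right
  | mul x y hx hy => rw [map_mul]; exact hx.mul_right hy

/-- the homomorphism sending a word `w` to `θ_w`. -/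
private def Θh (X : Type) (R : Finset (FreeGroup X)) : FreeGroup X →* M X R :=
  FreeGroup.lift fun x => θM X R (Sum.inl x)

private lemma commΘ (w v : FreeGroup X) :
    Commute (Θh X R w) (embX X R v) := by
  induction w using FreeGroup.induction_on with
  | C1 => rw [map_one]; exact Commute.one_left _
  | of x => exact commθ (Sum.inl x) v
  | inv_of x h => rw [map_inv]; exact h.inv_left
  | mul x y hx hy => rw [map_mul]; exact hx.mul_left hy

private lemma conj_comm {Mt : Type} [Group Mt] {g u : Mt} (q : Mt) (hc : Commute g u) :
    g * (u⁻¹ * q * u) * g⁻¹ = u⁻¹ * (g * q * g⁻¹) * u := by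
  calc g * (u⁻¹ * q * u) * g⁻¹ = (g * u⁻¹) * q * (u * g⁻¹) := by group
    _ = (u⁻¹ * g) * q * (g⁻¹ * u) := by rw [hc.inv_right.eq, ← hc.inv_left.eq]
    _ = u⁻¹ * (g * q * g⁻¹) * u := by group

private lemma conj_flip {Mt : Type} [Group Mt] {g u q : Mt}
    (h : g * q * g⁻¹ = u⁻¹ * q * u) (hc : Commute g u) : g⁻¹ * q * g = u * q * u⁻¹ := by
  have h2 : g⁻¹ * (u⁻¹ * q * u) * (g⁻¹)⁻¹ = u⁻¹ * (g⁻¹ * q * (g⁻¹)⁻¹) * u :=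
    conj_comm q hc.inv_left
  rw [inv_inv] at h2
  rw [← h] at h2
  have h3 : u⁻¹ * (g⁻¹ * q * g) * u = q := by rw [← h2]; group
  calc g⁻¹ * q * g = u * (u⁻¹ * (g⁻¹ * q * g) * u) * u⁻¹ := by group
    _ = u * q * u⁻¹ := by rw [h3]

private lemma keyΘ (w : FreeGroup X) :
    Θh X R w * qM X R * (Θh X R w)⁻¹ = (embX X R w)⁻¹ * qM X R * embX X R w := by
  induction w using FreeGroup.induction_on with
  | C1 => simp
  | of x =>
      have h : xM X R x * θM X R (Sum.inl x) * qM X R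
          = qM X R * xM X R x * θM X R (Sum.inl x) := by
        rw [← rel1]; exact rel2 x
      have hΘ : Θh X R (FreeGroup.of x) = θM X R (Sum.inl x) := FreeGroup.lift_apply_of
      show Θh X R (FreeGroup.of x) * qM X R * (Θh X R (FreeGroup.of x))⁻¹
          = (embX X R (FreeGroup.of x))⁻¹ * qM X R * embX X R (FreeGroup.of x)
      rw [hΘ, embX_of]
      calc θM X R (Sum.inl x) * qM X R * (θM X R (Sum.inl x))⁻¹
          = (xM X R x)⁻¹ * (xM X R x * θM X R (Sum.inl x) * qM X R)
              * (θM X R (Sum.inl x))⁻¹ := by group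
        _ = (xM X R x)⁻¹ * (qM X R * xM X R x * θM X R (Sum.inl x))
              * (θM X R (Sum.inl x))⁻¹ := by rw [h]
        _ = (xM X R x)⁻¹ * qM X R * xM X R x := by group
  | inv_of x ih =>
      rw [map_inv, map_inv, inv_inv]
      exact conj_flip ih (commΘ (FreeGroup.of x) (FreeGroup.of x))
  | mul a b ha hb =>
      rw [map_mul, map_mul]
      calc Θh X R a * Θh X R b * qM X R * (Θh X R a * Θh X R b)⁻¹
          = Θh X R a * (Θh X R b * qM X R * (Θh X R b)⁻¹) * (Θh X R a)⁻¹ := by group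
        _ = Θh X R a * ((embX X R b)⁻¹ * qM X R * embX X R b) * (Θh X R a)⁻¹ := by rw [hb]
        _ = (embX X R b)⁻¹ * (Θh X R a * qM X R * (Θh X R a)⁻¹) * embX X R b :=
            conj_comm _ (commΘ a b)
        _ = (embX X R b)⁻¹ * ((embX X R a)⁻¹ * qM X R * embX X R a) * embX X R b := by
            rw [ha]
        _ = (embX X R a * embX X R b)⁻¹ * qM X R * (embX X R a * embX X R b) := by group

/-- The set of words `u` such that `q` can be conjugated to `q u` by an element
commuting with all of `embX`. This is a normal subgroup containing `R`. -/
private def S (X : Type) (R : Finset (FreeGroup X)) : Subgroup (FreeGroup X) where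
  carrier := {u | ∃ g : M X R, (∀ v : FreeGroup X, Commute g (embX X R v)) ∧
      g * qM X R * g⁻¹ = qM X R * embX X R u}
  one_mem' := ⟨1, fun v => Commute.one_left _, by simp⟩
  mul_mem' := by
    rintro u v ⟨g, hgc, hg⟩ ⟨k, hkc, hk⟩
    refine ⟨g * k, fun w => (hgc w).mul_left (hkc w), ?_⟩
    calc g * k * qM X R * (g * k)⁻¹ = g * (k * qM X R * k⁻¹) * g⁻¹ := by group
      _ = g * (qM X R * embX X R v) * g⁻¹ := by rw [hk]
      _ = (g * qM X R * g⁻¹) * (g * embX X R v * g⁻¹) := by group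
      _ = (qM X R * embX X R u) * embX X R v := by
          rw [hg, (hgc v).eq]; group
      _ = qM X R * embX X R (u * v) := by rw [map_mul]; group
  inv_mem' := by
    rintro u ⟨g, hgc, hg⟩
    refine ⟨g⁻¹, fun w => (hgc w).inv_left, ?_⟩
    have h4 : g⁻¹ * qM X R * g * embX X R u = qM X R := by
      calc g⁻¹ * qM X R * g * embX X R u = g⁻¹ * qM X R * (g * embX X R u) := by group
        _ = g⁻¹ * qM X R * (embX X R u * g) := by rw [(hgc u).eq]
        _ = g⁻¹ * (qM X R * embX X R u) * g := by group
        _ = g⁻¹ * (g * qM X R * g⁻¹) * g := by rw [hg]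
        _ = qM X R := by group
    rw [map_inv]
    calc g⁻¹ * qM X R * g⁻¹⁻¹ = (g⁻¹ * qM X R * g * embX X R u) * (embX X R u)⁻¹ := by group
      _ = qM X R * (embX X R u)⁻¹ := by rw [h4]

private lemma S_normal : (S X R).Normal := by
  constructor
  rintro u ⟨g, hgc, hg⟩ n
  refine ⟨Θh X R n * g * (Θh X R n)⁻¹, ?_, ?_⟩
  · intro v
    exact ((commΘ n v).mul_left (hgc v)).mul_left (commΘ n v).inv_left
  · have hq : (Θh X R n)⁻¹ * qM X R * Θh X R n = embX X R n * qM X R * (embX X R n)⁻¹ :=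
      conj_flip (keyΘ n) (commΘ n n)
    have hstep : g * (embX X R n * qM X R * (embX X R n)⁻¹) * g⁻¹
        = embX X R n * (g * qM X R * g⁻¹) * (embX X R n)⁻¹ := by
      simpa using conj_comm (qM X R) (hgc n).inv_right
    have hstep2 : Θh X R n * (embX X R n * (qM X R * embX X R u) * (embX X R n)⁻¹) * (Θh X R n)⁻¹
        = embX X R n * (Θh X R n * (qM X R * embX X R u) * (Θh X R n)⁻¹) * (embX X R n)⁻¹ := by
      simpa using conj_comm (qM X R * embX X R u) (commΘ n n).inv_right
    have hstep3 : Θh X R n * (qM X R * embX X R u) * (Θh X R n)⁻¹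
        = ((embX X R n)⁻¹ * qM X R * embX X R n) * embX X R u := by
      calc Θh X R n * (qM X R * embX X R u) * (Θh X R n)⁻¹
          = (Θh X R n * qM X R * (Θh X R n)⁻¹) * (Θh X R n * embX X R u * (Θh X R n)⁻¹) := by
            group
        _ = ((embX X R n)⁻¹ * qM X R * embX X R n)
              * (Θh X R n * embX X R u * (Θh X R n)⁻¹) := by rw [keyΘ]
        _ = ((embX X R n)⁻¹ * qM X R * embX X R n)
              * (embX X R u * Θh X R n * (Θh X R n)⁻¹) := by rw [(commΘ n u).eq]
        _ = ((embX X R n)⁻¹ * qM X R * embX X R n) * embX X R u := by group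
    calc Θh X R n * g * (Θh X R n)⁻¹ * qM X R * (Θh X R n * g * (Θh X R n)⁻¹)⁻¹
        = Θh X R n * (g * ((Θh X R n)⁻¹ * qM X R * Θh X R n) * g⁻¹) * (Θh X R n)⁻¹ := by
          group
      _ = Θh X R n * (g * (embX X R n * qM X R * (embX X R n)⁻¹) * g⁻¹) * (Θh X R n)⁻¹ := by
          rw [hq]
      _ = Θh X R n * (embX X R n * (g * qM X R * g⁻¹) * (embX X R n)⁻¹) * (Θh X R n)⁻¹ := by
          rw [hstep]
      _ = Θh X R n * (embX X R n * (qM X R * embX X R u) * (embX X R n)⁻¹) * (Θh X R n)⁻¹ := by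
          rw [hg]
      _ = embX X R n * (Θh X R n * (qM X R * embX X R u) * (Θh X R n)⁻¹) * (embX X R n)⁻¹ :=
          hstep2
      _ = embX X R n * (((embX X R n)⁻¹ * qM X R * embX X R n) * embX X R u) * (embX X R n)⁻¹ := by
          rw [hstep3]
      _ = qM X R * embX X R (n * u * n⁻¹) := by
          simp only [map_mul, map_inv]; group

private lemma R_sub_S : (R : Set (FreeGroup X)) ⊆ (S X R : Set (FreeGroup X)) := by
  intro r hr
  refine ⟨θM X R (Sum.inr ⟨r, hr⟩), fun v => commθ _ v, ?_⟩
  have h := rel3 (X := X) (R := R) ⟨r, hr⟩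
  rw [h]; group

private lemma toG_eq_one_iff (u : FreeGroup X) :
    toG X R u = 1 ↔ u ∈ Subgroup.normalClosure (R : Set (FreeGroup X)) :=
  QuotientGroup.eq_one_iff u

/-- The projection of `M(G)` onto `G × ℤ` killing the `θ` generators. -/
private def fgen (X : Type) (R : Finset (FreeGroup X)) :
    Gen X R → G X R × Multiplicative ℤ :=
  fun s => match s with
  | Sum.inl x => (toG X R (FreeGroup.of x), 1)
  | Sum.inr (Sum.inl _) => 1
  | Sum.inr (Sum.inr _) => (1, Multiplicative.ofAdd 1)

private lemma lift_fgen_ofX (u : FreeGroup X) :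
    FreeGroup.lift (fgen X R) (ofX X R u) = (toG X R u, 1) := by
  have : (FreeGroup.lift (fgen X R)).comp (ofX X R)
      = (toG X R).prod (1 : FreeGroup X →* Multiplicative ℤ) := by
    apply FreeGroup.ext_hom
    intro a
    simp only [MonoidHom.comp_apply, MonoidHom.prod_apply, MonoidHom.one_apply]
    simp [ofX, fgen]
  exact DFunLike.congr_fun this u

private lemma fgen_rels : ∀ r ∈ rels X R, FreeGroup.lift (fgen X R) r = 1 := by
  rintro w (⟨a, x, rfl⟩ | ⟨x, rfl⟩ | ⟨r, rfl⟩) <;>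
    simp only [θg, xg, qg, map_mul, map_inv, FreeGroup.lift_apply_of, lift_fgen_ofX]
  · cases a <;> simp [fgen]
  · simp [fgen]
  · have hr1 : toG X R r.1 = 1 :=
      (toG_eq_one_iff r.1).2 (Subgroup.subset_normalClosure r.2)
    simp [fgen, hr1]

/-- The induced homomorphism `M(G) →* G × ℤ`. -/
private def φM (X : Type) (R : Finset (FreeGroup X)) :
    M X R →* G X R × Multiplicative ℤ :=
  PresentedGroup.toGroup (fgen_rels)

private lemma φM_toM (w : FreeGroup (Gen X R)) :
    φM X R (toM X R w) = FreeGroup.lift (fgen X R) w := rfl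

end MillerAux

open Miller in
/-- Sapir. For every word `u` on `X^{±1}`, the elements `qu` and `q` are
conjugate in the Miller machine `M(G)` if and only if `u` represents the identity of `G`. -/

theorem statement1 (X : Type) [Fintype X] (R : Finset (FreeGroup X)) (hR : R.Nonempty)
    (u : FreeGroup X) :
    IsConj (qM X R * embX X R u) (qM X R) ↔ toG X R u = 1 := by
  constructor
  · intro hconj
    have h1 : IsConj (φM X R (qM X R * embX X R u)) (φM X R (qM X R)) :=
      (φM X R).map_isConj hconj
    have hq : φM X R (qM X R) = (1, Multiplicative.ofAdd 1) := by
      rw [show qM X R = toM X R (qg X R) from rfl, φM_toM]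
      simp [qg, FreeGroup.lift_apply_of, fgen]
    have hu : φM X R (embX X R u) = (toG X R u, 1) := by
      rw [show embX X R u = toM X R (ofX X R u) from rfl, φM_toM, lift_fgen_ofX]
    rw [map_mul, hq, hu] at h1
    have h2 : IsConj ((1, Multiplicative.ofAdd 1) * ((toG X R u, 1) :
        G X R × Multiplicative ℤ)).1 ((1 : G X R), Multiplicative.ofAdd (1:ℤ)).1 :=
      (MonoidHom.fst _ _).map_isConj h1
    simp only [Prod.fst_mul, one_mul, Prod.mk_mul_mk, mul_one] at h2
    obtain ⟨c, hc⟩ := isConj_iff.1 h2.symm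
    rw [← hc]; group
  · intro h1
    have hu : u ∈ S X R := by
      have := S_normal (X := X) (R := R)
      exact Subgroup.normalClosure_le_normal R_sub_S ((toG_eq_one_iff u).1 h1)
    obtain ⟨g, hgc, hg⟩ := hu
    rw [isConj_iff]
    refine ⟨g⁻¹, ?_⟩
    have h3 : g⁻¹ * (qM X R * embX X R u) * g = qM X R := by rw [← hg]; group
    calc g⁻¹ * (qM X R * embX X R u) * g⁻¹⁻¹ = g⁻¹ * (qM X R * embX X R u) * g := by
          rw [inv_inv]
      _ = qM X R := h3
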